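/- The computation offloading game is an ordinal potential game with potential φ: for every user k and every pair of strategy profiles α, α' that agree at every coordinate n ≠ k, the sign of (φ α − φ α') equals the sign of (c k α − c k α'), where c k is the individual cost of user k. -/

import Mathlib

lemma sign_eq_sign_of_iff {x y : ℝ} (h1 : x < 0 ↔ y < 0) (h2 : 0 < x ↔ 0 < y) :
    Real.sign x = Real.sign y := by
  rcases lt_trichotomy x 0 with hx | hx | hx
  · rw [Real.sign_of_neg hx, Real.sign_of_neg (h1.mp hx)]
  · have hy : y = 0 := by
      rcases lt_trichotomy y 0 with h | h | h
      · exact absurd (h1.mpr h) (by simp [hx])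
      · exact h
      · exact absurd (h2.mpr h) (by simp [hx])
    rw [hx, hy]
  · rw [Real.sign_of_pos hx, Real.sign_of_pos (h2.mp hx)]

lemma sign_mul_pos_left {w x : ℝ} (hw : 0 < w) : Real.sign (w * x) = Real.sign x := by
  apply sign_eq_sign_of_iff
  · constructor
    · intro h; nlinarith
    · intro h; exact mul_neg_of_pos_of_neg hw h
  · constructor
    · intro h; nlinarith
    · intro h; exact mul_pos hw h

lemma aux_mono {P B' w σ2 : ℝ} (hP : 0 < P) (hB' : 0 < B') (hw : 0 < w) 
    {x y : ℝ} (hx : -σ2 < x) (hxy : x < y) :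
    P / (B' * Real.logb 2 (1 + w / (x + σ2))) < P / (B' * Real.logb 2 (1 + w / (y + σ2))) := by
  have hx0 : 0 < x + σ2 := by linarith
  have hy0 : 0 < y + σ2 := by linarith
  have hdiv : w / (y + σ2) < w / (x + σ2) := div_lt_div_of_pos_left hw hx0 (by linarith)
  have hy1 : (1:ℝ) < 1 + w / (y + σ2) := by
    have : 0 < w / (y + σ2) := div_pos hw hy0
    linarith
  have hlog : Real.logb 2 (1 + w / (y + σ2)) < Real.logb 2 (1 + w / (x + σ2)) :=
    Real.logb_lt_logb (by norm_num) (by linarith) (by linarith)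
  have hlogy : 0 < Real.logb 2 (1 + w / (y + σ2)) := Real.logb_pos (by norm_num) hy1
  exact div_lt_div_of_pos_left hP (by positivity) (by nlinarith)

lemma aux_sign {P B' w σ2 : ℝ} (hP : 0 < P) (hB' : 0 < B') (hw : 0 < w) 
    {x y : ℝ} (hx : -σ2 < x) (hy : -σ2 < y) :
    Real.sign ((P / (B' * Real.logb 2 (1 + w / (x + σ2)))) -
      (P / (B' * Real.logb 2 (1 + w / (y + σ2))))) = Real.sign (x - y) := by
  rcases lt_trichotomy x y with hxy | hxy | hxy
  · have := aux_mono hP hB' hw hx hxy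
    rw [Real.sign_of_neg (by linarith), Real.sign_of_neg (by linarith)]
  · subst hxy; simp
  · have := aux_mono hP hB' hw hy hxy
    rw [Real.sign_of_pos (by linarith), Real.sign_of_pos (by linarith)]

/-- The computation offloading game is an ordinal potential game with
potential `φ`: for every unilateral deviation of any user `k`, the sign of the
potential change equals the sign of the change in the cost of `k`. -/
theorem ordinal_potential_game
    (K M : ℕ) (B σ2 τ ζ : ℝ)
    (hB : 0 < B) (hσ : 0 < σ2) (hτ : 0 < τ) (hζ : 0 < ζ)
    (p h I D S : Fin K → ℝ)
    (hp : ∀ k, 0 < p k) (hh : ∀ k, 0 < h k) (hI : ∀ k, 0 < I k)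
    (hD : ∀ k, 0 < D k) (hS : ∀ k, 0 < S k)
    (b : Fin K → ℝ) (hb : ∀ k, b k = 0 ∨ b k = 1)
    (w : Fin K → ℝ) (hw : ∀ k, w k = p k * h k)
    (Υ : Fin K → (Fin K → Fin (M + 1)) → ℝ)
    (hΥ : ∀ k α, Υ k α =
      ∑ n ∈ (Finset.univ.erase k).filter (fun n => α n = α k), w n)
    (r : Fin K → (Fin K → Fin (M + 1)) → ℝ)
    (hr : ∀ k α, r k α = (B / (M : ℝ)) * Real.logb 2 (1 + w k / (Υ k α + σ2)))
    (EL : Fin K → ℝ) (hEL : ∀ k, EL k = ζ * S k ^ 3 / τ ^ 2)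
    (EO : Fin K → (Fin K → Fin (M + 1)) → ℝ)
    (hEO : ∀ k α, EO k α = p k * (I k + (1 - b k) * D k) / r k α)
    (c : Fin K → (Fin K → Fin (M + 1)) → ℝ)
    (hc : ∀ k α, c k α = if α k = 0 then EL k else EO k α)
    (V : Fin K → ℝ)
    (hV : ∀ k, V k = w k /
        ((2 : ℝ) ^ (p k * τ ^ 2 * (M : ℝ) * (I k + (1 - b k) * D k) / (B * ζ * S k ^ 3)) - 1)
      - σ2)
    (φ : (Fin K → Fin (M + 1)) → ℝ)
    (hφ : ∀ α, φ α =
      (1 / 2) * ∑ k : Fin K, ∑ n ∈ Finset.univ.erase k,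
          w k * w n * (if α n = α k then (1 : ℝ) else 0) * (if 0 < α k then (1 : ℝ) else 0)
      + ∑ k : Fin K, w k * V k * (if α k = 0 then (1 : ℝ) else 0))
    :
    ∀ (k : Fin K) (α α' : Fin K → Fin (M + 1)),
      (∀ n, n ≠ k → α n = α' n) →
      Real.sign (φ α - φ α') = Real.sign (c k α - c k α') := by
  intro k α α' hag
  by_cases hak : α k = α' k
  · have hαα : α = α' := by
      funext n
      by_cases hn : n = k
      · subst hn; exact hak
      · exact hag n hn
    simp [hαα]
  -- nontrivial deviation
  have hwk : 0 < w k := by rw [hw]; exact mul_pos (hp k) (hh k)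
  have hwpos : ∀ n, 0 < w n := fun n => by rw [hw]; exact mul_pos (hp n) (hh n)
  have hM : 0 < M := by
    rcases Nat.eq_zero_or_pos M with hM0 | hM0
    · subst hM0
      exact absurd (Fin.ext (by omega : (α k).val = (α' k).val)) hak
    · exact hM0
  have hMR : (0:ℝ) < (M:ℝ) := by exact_mod_cast hM
  set P := p k * (I k + (1 - b k) * D k) with hPdef
  have hIb : 0 < I k + (1 - b k) * D k := by
    rcases hb k with h0 | h1
    · rw [h0]; have := hI k; have := hD k; nlinarith
    · rw [h1]; simpa using hI k
  have hP : 0 < P := mul_pos (hp k) hIb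
  set B' := B / (M:ℝ) with hB'def
  have hB' : 0 < B' := div_pos hB hMR
  -- T m : total weight of other users on strategy m (w.r.t. α', = α off k)
  set T : Fin (M+1) → ℝ :=
    fun m => ∑ n ∈ Finset.univ.erase k, if α' n = m then w n else 0 with hTdef
  have hTnn : ∀ m, 0 ≤ T m := by
    intro m
    apply Finset.sum_nonneg
    intro n _
    split
    · exact (hwpos n).le
    · exact le_rfl
  have hΥα : Υ k α = T (α k) := by
    rw [hΥ, Finset.sum_filter]
    apply Finset.sum_congr rfl
    intro n hn
    rw [hag n (Finset.mem_erase.mp hn).1]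
  have hΥα' : Υ k α' = T (α' k) := by
    rw [hΥ, Finset.sum_filter]
  -- f : interference ↦ offloading energy
  set f : ℝ → ℝ := fun x => P / (B' * Real.logb 2 (1 + w k / (x + σ2))) with hfdef
  -- V k + σ2 > 0 and f (V k) = EL k
  set t : ℝ := p k * τ ^ 2 * (M : ℝ) * (I k + (1 - b k) * D k) / (B * ζ * S k ^ 3) with htdef
  have ht : 0 < t := by
    apply div_pos
    · have := hp k; positivity
    · have := hS k; positivity
  have h2t : (1:ℝ) < (2:ℝ) ^ t := by
    rw [show ((2:ℝ) ^ t) = Real.rpow 2 t from rfl]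
    exact Real.one_lt_rpow_iff_of_pos (by norm_num) |>.mpr (Or.inl ⟨by norm_num, ht⟩)
  have hVσ : V k + σ2 = w k / ((2:ℝ) ^ t - 1) := by rw [hV]; ring
  have hVσpos : 0 < V k + σ2 := by
    rw [hVσ]; exact div_pos hwk (by linarith)
  have hELpos : 0 < EL k := by rw [hEL]; have := hS k; positivity
  have hfV : f (V k) = EL k := by
    have h2 : (2:ℝ) ^ t - 1 ≠ 0 := by linarith
    have h1 : w k / (V k + σ2) = (2:ℝ) ^ t - 1 := by
      rw [hVσ]
      field_simp
    have hBt : B' * t = P / EL k := by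
      rw [hB'def, htdef, hEL, hPdef]
      have hS3 : (0:ℝ) ≠ S k ^ 3 := by have := hS k; positivity
      field_simp
    rw [hfdef]
    simp only
    rw [h1, show (1 + ((2:ℝ) ^ t - 1)) = (2:ℝ)^t by ring,
      Real.logb_rpow (by norm_num) (by norm_num), hBt]
    field_simp
  -- costs as values of f
  have hcf : ∀ (β : Fin K → Fin (M+1)), c k β = f (if β k = 0 then V k else Υ k β) := by
    intro β
    rw [hc]
    by_cases hβ : β k = 0
    · simp [hβ, hfV]
    · simp only [hβ, if_neg hβ, if_false]
      rw [hEO, hr, hfdef]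
  set u : ℝ := if α k = 0 then V k else T (α k) with hudef
  set u' : ℝ := if α' k = 0 then V k else T (α' k) with hu'def
  have hcα : c k α = f u := by rw [hcf, hudef, hΥα]
  have hcα' : c k α' = f u' := by rw [hcf, hu'def, hΥα']
  have hu : -σ2 < u := by
    rw [hudef]; split
    · linarith
    · have := hTnn (α k); linarith
  have hu' : -σ2 < u' := by
    rw [hu'def]; split
    · linarith
    · have := hTnn (α' k); linarith
  -- the potential difference
  have hφkey : ∀ (β : Fin K → Fin (M+1)), (∀ n, n ≠ k → β n = α' n) →
      φ β = (1/2) * ((∑ i ∈ Finset.univ.erase k, ∑ n ∈ (Finset.univ.erase i).erase k,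
          w i * w n * (if α' n = α' i then (1:ℝ) else 0) * (if 0 < α' i then (1:ℝ) else 0))
        + 2 * (w k * ((if 0 < β k then (1:ℝ) else 0) * T (β k))))
      + ((∑ i ∈ Finset.univ.erase k, w i * V i * (if α' i = 0 then (1:ℝ) else 0))
        + w k * V k * (if β k = 0 then (1:ℝ) else 0)) := by
    intro β hβ
    rw [hφ]
    rw [← Finset.sum_erase_add _ _ (Finset.mem_univ k),
        ← Finset.sum_erase_add _ _ (Finset.mem_univ k)]
    have e2 : ∑ i ∈ Finset.univ.erase k, w i * V i * (if β i = 0 then (1:ℝ) else 0)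
        = ∑ i ∈ Finset.univ.erase k, w i * V i * (if α' i = 0 then (1:ℝ) else 0) := by
      apply Finset.sum_congr rfl
      intro i hi
      rw [hβ i (Finset.mem_erase.mp hi).1]
    have ek : ∑ n ∈ Finset.univ.erase k,
        w k * w n * (if β n = β k then (1:ℝ) else 0) * (if 0 < β k then (1:ℝ) else 0)
        = w k * ((if 0 < β k then (1:ℝ) else 0) * T (β k)) := by
      rw [hTdef, Finset.mul_sum, Finset.mul_sum]
      apply Finset.sum_congr rfl
      intro n hn
      rw [hβ n (Finset.mem_erase.mp hn).1]
      by_cases h1 : α' n = β k <;> simp [h1] <;> ring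
    have erest : ∀ i ∈ Finset.univ.erase k,
        (∑ n ∈ Finset.univ.erase i,
          w i * w n * (if β n = β i then (1:ℝ) else 0) * (if 0 < β i then (1:ℝ) else 0))
        = (∑ n ∈ (Finset.univ.erase i).erase k,
            w i * w n * (if α' n = α' i then (1:ℝ) else 0) * (if 0 < α' i then (1:ℝ) else 0))
          + w i * w k * (if β k = α' i then (1:ℝ) else 0) * (if 0 < α' i then (1:ℝ) else 0) := by
      intro i hi
      have hik : i ≠ k := (Finset.mem_erase.mp hi).1
      have hki : k ∈ Finset.univ.erase i := Finset.mem_erase.mpr ⟨fun hc => hik hc.symm, Finset.mem_univ k⟩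
      rw [← Finset.sum_erase_add _ _ hki]
      congr 1
      · apply Finset.sum_congr rfl
        intro n hn
        have hnk : n ≠ k := (Finset.mem_erase.mp hn).1
        rw [hβ n hnk, hβ i hik]
      · rw [hβ i hik]
    rw [Finset.sum_congr rfl erest, Finset.sum_add_distrib, e2, ek]
    have efin : ∑ i ∈ Finset.univ.erase k,
        w i * w k * (if β k = α' i then (1:ℝ) else 0) * (if 0 < α' i then (1:ℝ) else 0)
        = w k * ((if 0 < β k then (1:ℝ) else 0) * T (β k)) := by
      rw [hTdef, Finset.mul_sum, Finset.mul_sum]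
      apply Finset.sum_congr rfl
      intro n hn
      by_cases h0 : β k = 0
      · have : ¬ (0 < β k) := by simp [h0]
        by_cases h1 : α' n = β k
        · have : ¬ (0 < α' n) := by rw [h1]; simp [h0]
          simp [h1, this, h0]
        · have h1' : ¬ (β k = α' n) := fun hc => h1 hc.symm
          simp [h1', h0]
          intro hpos heq
          rw [← heq] at hpos
          exact absurd hpos (lt_irrefl _)
      · have hpos : 0 < β k := Fin.pos_iff_ne_zero.mpr h0
        by_cases h1 : α' n = β k
        · have : 0 < α' n := by rw [h1]; exact hpos
          simp [h1, this, hpos]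
          ring
        · have h1' : ¬ (β k = α' n) := fun hc => h1 hc.symm
          simp [h1', h1, hpos]
    rw [efin]
    ring
  have hφdiff : φ α - φ α' = w k * (u - u') := by
    rw [hφkey α hag, hφkey α' (fun _ _ => rfl), hudef, hu'def]
    by_cases h0 : α k = 0 <;> by_cases h0' : α' k = 0 <;>
      simp [h0, h0', Fin.pos_iff_ne_zero] <;> ring
  -- conclude
  rw [hφdiff, hcα, hcα', sign_mul_pos_left hwk, hfdef]
  simp only
  rw [aux_sign hP hB' hwk hu hu']
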